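/- arXiv:1102.5206 — 2 statements merged into one kernel-verified Lean document; each statement's English description precedes it below -/
import Mathlib

section
/- For all m ≥ 3, the domination number of the 3×m grid graph equals ⌈(3m+1)/4⌉. -/
/-- The `n × m` grid graph: vertices `[n] × [m]`, with `(i,j)` adjacent to `(k,l)`
iff `|i-k| + |j-l| = 1`. -/
def gridGraph (n m : ℕ) : SimpleGraph (Fin n × Fin m) where
  Adj u v := Nat.dist u.1.val v.1.val + Nat.dist u.2.val v.2.val = 1
  symm := ⟨by intro u v h; simpa [Nat.dist_comm] using h⟩
  loopless := ⟨by intro u h; simp [Nat.dist_self] at h⟩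

instance (n m : ℕ) : DecidableRel (gridGraph n m).Adj :=
  fun _ _ => instDecidableEqNat _ _

/-- Closed neighborhood `N[S]` of a set of vertices. -/
def closedNbhd (n m : ℕ) (S : Finset (Fin n × Fin m)) : Finset (Fin n × Fin m) :=
  S.biUnion fun v => insert v ((gridGraph n m).neighborFinset v)

/-- The loss `ℓ(S) = 5|S| - |N[S]|`. -/
def loss (n m : ℕ) (S : Finset (Fin n × Fin m)) : ℤ :=
  5 * S.card - (closedNbhd n m S).card

/-- `D` is a dominating set: every vertex lies in `N[D]`. -/
def IsDominating (n m : ℕ) (D : Finset (Fin n × Fin m)) : Prop :=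
  closedNbhd n m D = Finset.univ

/-- The domination number `γ(G_{n,m})`. -/
noncomputable def domNumber (n m : ℕ) : ℕ :=
  sInf {k | ∃ D : Finset (Fin n × Fin m), IsDominating n m D ∧ D.card = k}

/-- The minimum loss `ℓ_{n,m}` over dominating sets of `G_{n,m}`. -/
noncomputable def minLoss (n m : ℕ) : ℤ :=
  sInf {l | ∃ D : Finset (Fin n × Fin m), IsDominating n m D ∧ loss n m D = l}


/-! ### Basic lemmas -/

lemma adj_iff {n m : ℕ} {u v : Fin n × Fin m} :
    (gridGraph n m).Adj u v ↔ Nat.dist u.1.val v.1.val + Nat.dist u.2.val v.2.val = 1 :=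
  Iff.rfl

lemma mem_closedNbhd {n m : ℕ} {S : Finset (Fin n × Fin m)} {v : Fin n × Fin m} :
    v ∈ closedNbhd n m S ↔ ∃ u ∈ S, v = u ∨ (gridGraph n m).Adj u v := by
  simp [closedNbhd, SimpleGraph.mem_neighborFinset]

lemma isDominating_iff {n m : ℕ} {D : Finset (Fin n × Fin m)} :
    IsDominating n m D ↔ ∀ v, ∃ u ∈ D, v = u ∨ (gridGraph n m).Adj u v := by
  unfold IsDominating
  rw [Finset.eq_univ_iff_forall]
  simp [mem_closedNbhd]

lemma univ_isDominating (n m : ℕ) : IsDominating n m Finset.univ :=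
  isDominating_iff.mpr fun v => ⟨v, Finset.mem_univ v, Or.inl rfl⟩

lemma domNumber_le {n m : ℕ} {D : Finset (Fin n × Fin m)} (hD : IsDominating n m D) :
    domNumber n m ≤ D.card :=
  Nat.sInf_le ⟨D, hD, rfl⟩

lemma exists_minDom (n m : ℕ) :
    ∃ D : Finset (Fin n × Fin m), IsDominating n m D ∧ D.card = domNumber n m :=
  Nat.sInf_mem (⟨(Finset.univ : Finset (Fin n × Fin m)).card, Finset.univ,
    univ_isDominating n m, rfl⟩ :
    Set.Nonempty {k | ∃ D : Finset (Fin n × Fin m), IsDominating n m D ∧ D.card = k})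
/-! ### Shrinking constructions -/

/-- Truncate to the first `n` columns and add the center of the last column. -/
lemma shrink_center {m : ℕ} (n : ℕ) (hn : 1 ≤ n) (hnm : n < m)
    (D : Finset (Fin 3 × Fin m)) (hD : IsDominating 3 m D) :
    ∃ D' : Finset (Fin 3 × Fin n), IsDominating 3 n D' ∧
      D'.card ≤ (D.filter (fun v => v.2.val < n)).card + 1 := by
  refine ⟨((D.filter (fun v => v.2.val < n)).image
      (fun v => (v.1, (⟨min v.2.val (n-1), by omega⟩ : Fin n)))) ∪
      {((⟨1, by omega⟩ : Fin 3), (⟨n-1, by omega⟩ : Fin n))}, ?_, ?_⟩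
  · rw [isDominating_iff]
    intro v
    by_cases hlast : v.2.val = n - 1
    · refine ⟨((⟨1, by omega⟩ : Fin 3), (⟨n-1, by omega⟩ : Fin n)),
        Finset.mem_union_right _ (Finset.mem_singleton_self _), ?_⟩
      have hv1 : v.1.val < 3 := v.1.isLt
      simp only [adj_iff, Prod.ext_iff, Fin.ext_iff, Nat.dist]
      omega
    · have hvlt : v.2.val < n := v.2.isLt
      obtain ⟨u, hu, hrel⟩ := isDominating_iff.mp hD (v.1, (⟨v.2.val, by omega⟩ : Fin m))
      have hrelv : (v.1.val = u.1.val ∧ v.2.val = u.2.val) ∨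
          Nat.dist u.1.val v.1.val + Nat.dist u.2.val v.2.val = 1 := by
        rcases hrel with he | ha
        · exact Or.inl ⟨congrArg (fun p => p.1.val) he, congrArg (fun p => p.2.val) he⟩
        · rw [adj_iff] at ha
          exact Or.inr ha
      have hu2 : u.2.val < n := by
        simp only [Nat.dist] at hrelv; omega
      refine ⟨(u.1, (⟨min u.2.val (n-1), by omega⟩ : Fin n)),
        Finset.mem_union_left _
          (Finset.mem_image.mpr ⟨u, Finset.mem_filter.mpr ⟨hu, hu2⟩, rfl⟩), ?_⟩
      simp only [adj_iff, Prod.ext_iff, Fin.ext_iff, Nat.dist] at hrelv ⊢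
      omega
  · calc _ ≤ _ + 1 := Finset.card_union_le _ _
    _ ≤ _ + 1 := by
        exact Nat.add_le_add_right Finset.card_image_le 1

/-- Shift column `n` onto column `n-1` and truncate. -/
lemma shrink_shift {m : ℕ} (n : ℕ) (hn : 1 ≤ n) (hnm : n < m)
    (D : Finset (Fin 3 × Fin m)) (hD : IsDominating 3 m D) :
    ∃ D' : Finset (Fin 3 × Fin n), IsDominating 3 n D' ∧
      D'.card ≤ (D.filter (fun v => v.2.val ≤ n)).card := by
  refine ⟨(D.filter (fun v => v.2.val ≤ n)).image
      (fun v => (v.1, (⟨min v.2.val (n-1), by omega⟩ : Fin n))), ?_, Finset.card_image_le⟩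
  rw [isDominating_iff]
  intro v
  have hvlt : v.2.val < n := v.2.isLt
  obtain ⟨u, hu, hrel⟩ := isDominating_iff.mp hD (v.1, (⟨v.2.val, by omega⟩ : Fin m))
  have hrelv : (v.1.val = u.1.val ∧ v.2.val = u.2.val) ∨
      Nat.dist u.1.val v.1.val + Nat.dist u.2.val v.2.val = 1 := by
    rcases hrel with he | ha
    · exact Or.inl ⟨congrArg (fun p => p.1.val) he, congrArg (fun p => p.2.val) he⟩
    · rw [adj_iff] at ha
      exact Or.inr ha
  have hu2 : u.2.val ≤ n := by
    simp only [Nat.dist] at hrelv; omega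
  refine ⟨(u.1, (⟨min u.2.val (n-1), by omega⟩ : Fin n)),
    Finset.mem_image.mpr ⟨u, Finset.mem_filter.mpr ⟨hu, hu2⟩, rfl⟩, ?_⟩
  simp only [adj_iff, Prod.ext_iff, Fin.ext_iff, Nat.dist] at hrelv ⊢
  omega
/-! ### Transport of the last `k` columns to a `3 × k` block -/

lemma block_transport {m : ℕ} (k : ℕ) (hk : 1 ≤ k) (hkm : k ≤ m)
    (D : Finset (Fin 3 × Fin m)) (hD : IsDominating 3 m D) :
    ∃ S : Finset (Fin 3 × Fin k),
      (∀ w : Fin 3 × Fin k, 1 ≤ w.2.val →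
        ∃ u ∈ S, w = u ∨ (gridGraph 3 k).Adj u w) ∧
      S.card ≤ (D.filter (fun v => m - k ≤ v.2.val)).card ∧
      ∀ j : ℕ, (S.filter (fun v => j ≤ v.2.val)).card ≤
        (D.filter (fun v => m - k + j ≤ v.2.val)).card := by
  refine ⟨(D.filter (fun v => m - k ≤ v.2.val)).image
      (fun v => (v.1, (⟨v.2.val - (m - k), by have := v.2.isLt; omega⟩ : Fin k))),
      ?_, Finset.card_image_le, ?_⟩
  · intro w hw
    have hwlt : w.2.val < k := w.2.isLt
    obtain ⟨u, hu, hrel⟩ := isDominating_iff.mp hD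
      (w.1, (⟨m - k + w.2.val, by omega⟩ : Fin m))
    have hrelv : (w.1.val = u.1.val ∧ m - k + w.2.val = u.2.val) ∨
        Nat.dist u.1.val w.1.val + Nat.dist u.2.val (m - k + w.2.val) = 1 := by
      rcases hrel with he | ha
      · exact Or.inl ⟨congrArg (fun p => p.1.val) he, congrArg (fun p => p.2.val) he⟩
      · rw [adj_iff] at ha
        exact Or.inr ha
    have hu2 : m - k ≤ u.2.val := by
      simp only [Nat.dist] at hrelv; omega
    refine ⟨(u.1, (⟨u.2.val - (m - k), by have := u.2.isLt; omega⟩ : Fin k)),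
      Finset.mem_image.mpr ⟨u, Finset.mem_filter.mpr ⟨hu, hu2⟩, rfl⟩, ?_⟩
    simp only [adj_iff, Prod.ext_iff, Fin.ext_iff, Nat.dist] at hrelv ⊢
    omega
  · intro j
    refine le_trans (Finset.card_le_card ?_) (Finset.card_image_le
      (s := D.filter (fun v => m - k + j ≤ v.2.val))
      (f := fun v => (v.1, (⟨v.2.val - (m - k), by have := v.2.isLt; omega⟩ : Fin k))))
    intro w hw
    rw [Finset.mem_filter] at hw
    obtain ⟨hw1, hw2⟩ := hw
    rw [Finset.mem_image] at hw1 ⊢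
    obtain ⟨u, hu, rfl⟩ := hw1
    rw [Finset.mem_filter] at hu
    refine ⟨u, Finset.mem_filter.mpr ⟨hu.1, ?_⟩, rfl⟩
    simp only at hw2
    omega
/-! ### Finite block lemmas -/

set_option maxRecDepth 10000 in
lemma block2F (S : Finset (Fin 3 × Fin 2))
    (h : ∀ w : Fin 3 × Fin 2, 1 ≤ w.2.val → ∃ u ∈ S, w = u ∨ (gridGraph 3 2).Adj u w) :
    1 ≤ (S.filter (fun v => 1 ≤ v.2.val)).card ∨ 2 ≤ S.card := by
  revert h
  revert S
  decide

set_option maxHeartbeats 1000000 in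
lemma block4b : ∀ a b c d e f g h i j k l : Bool,
    ((b || (a || (c || f))) &&
     (f || (e || (g || (b || j)))) &&
     (j || (i || (k || f))) &&
     (c || (b || (d || g))) &&
     (g || (f || (h || (c || k)))) &&
     (k || (j || (l || g))) &&
     (d || (c || h)) &&
     (h || (g || (d || l))) &&
     (l || (k || h))) = true →
    3 ≤ ((if b = true then 1 else 0) + (if c = true then 1 else 0) + (if d = true then 1 else 0)
       + (if f = true then 1 else 0) + (if g = true then 1 else 0) + (if h = true then 1 else 0)
       + (if j = true then 1 else 0) + (if k = true then 1 else 0) + (if l = true then 1 else 0) : ℕ) ∨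
    4 ≤ ((if a = true then 1 else 0) + (if b = true then 1 else 0) + (if c = true then 1 else 0)
       + (if d = true then 1 else 0) + (if e = true then 1 else 0) + (if f = true then 1 else 0)
       + (if g = true then 1 else 0) + (if h = true then 1 else 0) + (if i = true then 1 else 0)
       + (if j = true then 1 else 0) + (if k = true then 1 else 0) + (if l = true then 1 else 0) : ℕ) := by
  decide

set_option maxHeartbeats 1000000 in
lemma block4F (S : Finset (Fin 3 × Fin 4))
    (h : ∀ w : Fin 3 × Fin 4, 1 ≤ w.2.val → ∃ u ∈ S, w = u ∨ (gridGraph 3 4).Adj u w) :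
    3 ≤ (S.filter (fun v => 1 ≤ v.2.val)).card ∨ 4 ≤ S.card := by
  have H : ∀ (w : Fin 3 × Fin 4) (L : List (Fin 3 × Fin 4)),
      (∀ u : Fin 3 × Fin 4, (w = u ∨ (gridGraph 3 4).Adj u w) → u ∈ L) → 1 ≤ w.2.val →
      ∃ u ∈ L, u ∈ S := by
    intro w L hL hw
    obtain ⟨u, hu, hrel⟩ := h w hw
    exact ⟨u, hL u hrel, hu⟩
  have h01 := H (0,1) [(0,1),(0,0),(0,2),(1,1)] (by decide) (by decide)
  have h11 := H (1,1) [(1,1),(1,0),(1,2),(0,1),(2,1)] (by decide) (by decide)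
  have h21 := H (2,1) [(2,1),(2,0),(2,2),(1,1)] (by decide) (by decide)
  have h02 := H (0,2) [(0,2),(0,1),(0,3),(1,2)] (by decide) (by decide)
  have h12 := H (1,2) [(1,2),(1,1),(1,3),(0,2),(2,2)] (by decide) (by decide)
  have h22 := H (2,2) [(2,2),(2,1),(2,3),(1,2)] (by decide) (by decide)
  have h03 := H (0,3) [(0,3),(0,2),(1,3)] (by decide) (by decide)
  have h13 := H (1,3) [(1,3),(1,2),(0,3),(2,3)] (by decide) (by decide)
  have h23 := H (2,3) [(2,3),(2,2),(1,3)] (by decide) (by decide)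
  simp only [List.mem_cons, List.not_mem_nil, or_false, exists_eq_or_imp, exists_eq_left]
    at h01 h11 h21 h02 h12 h22 h03 h13 h23
  have key := block4b
    (decide (((0:Fin 3),(0:Fin 4)) ∈ S)) (decide (((0:Fin 3),(1:Fin 4)) ∈ S))
    (decide (((0:Fin 3),(2:Fin 4)) ∈ S)) (decide (((0:Fin 3),(3:Fin 4)) ∈ S))
    (decide (((1:Fin 3),(0:Fin 4)) ∈ S)) (decide (((1:Fin 3),(1:Fin 4)) ∈ S))
    (decide (((1:Fin 3),(2:Fin 4)) ∈ S)) (decide (((1:Fin 3),(3:Fin 4)) ∈ S))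
    (decide (((2:Fin 3),(0:Fin 4)) ∈ S)) (decide (((2:Fin 3),(1:Fin 4)) ∈ S))
    (decide (((2:Fin 3),(2:Fin 4)) ∈ S)) (decide (((2:Fin 3),(3:Fin 4)) ∈ S))
    (by simp only [Bool.and_eq_true, Bool.or_eq_true, decide_eq_true_eq]
        exact ⟨⟨⟨⟨⟨⟨⟨⟨h01,h11⟩,h21⟩,h02⟩,h12⟩,h22⟩,h03⟩,h13⟩,h23⟩)
  simp only [decide_eq_true_eq] at key
  have hcard : S.card = ∑ v : Fin 3 × Fin 4, if v ∈ S then 1 else 0 := by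
    rw [← Finset.card_filter]
    exact (congrArg Finset.card (Finset.filter_univ_mem S)).symm
  have hfilt : (S.filter (fun v => 1 ≤ v.2.val)).card
      = ∑ v : Fin 3 × Fin 4, if (v ∈ S ∧ 1 ≤ v.2.val) then 1 else 0 := by
    rw [← Finset.card_filter]
    congr 1
    ext v
    simp [and_comm]
  rw [Fintype.sum_prod_type, Fin.sum_univ_three, Fin.sum_univ_four, Fin.sum_univ_four,
    Fin.sum_univ_four] at hcard hfilt
  simp only [show ¬((1:ℕ) ≤ ((0:Fin 4)).val) from by decide,
    show (1:ℕ) ≤ ((1:Fin 4)).val from by decide,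
    show (1:ℕ) ≤ ((2:Fin 4)).val from by decide,
    show (1:ℕ) ≤ ((3:Fin 4)).val from by decide,
    and_true, and_false, if_false, add_zero, zero_add] at hfilt
  rcases key with hk | hk
  · left; omega
  · right; omega
/-! ### Base cases for the lower bound -/

set_option maxRecDepth 100000 in
lemma base3F : ∀ D : Finset (Fin 3 × Fin 3), closedNbhd 3 3 D = Finset.univ → 3 ≤ D.card := by
  decide

set_option maxHeartbeats 1000000 in
lemma base4b : ∀ a b c d e f g h i j k l : Bool,
    ((a || (b || e)) &&
     (b || (a || (c || f))) &&
     (c || (b || (d || g))) &&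
     (d || (c || h)) &&
     (e || (a || (i || f))) &&
     (f || (e || (g || (b || j)))) &&
     (g || (f || (h || (c || k)))) &&
     (h || (g || (d || l))) &&
     (i || (e || j)) &&
     (j || (i || (k || f))) &&
     (k || (j || (l || g))) &&
     (l || (k || h))) = true →
    4 ≤ ((if a = true then 1 else 0) + (if b = true then 1 else 0) + (if c = true then 1 else 0)
       + (if d = true then 1 else 0) + (if e = true then 1 else 0) + (if f = true then 1 else 0)
       + (if g = true then 1 else 0) + (if h = true then 1 else 0) + (if i = true then 1 else 0)
       + (if j = true then 1 else 0) + (if k = true then 1 else 0) + (if l = true then 1 else 0) : ℕ) := by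
  decide

set_option maxHeartbeats 1000000 in
lemma base4F (S : Finset (Fin 3 × Fin 4)) (hS : IsDominating 3 4 S) : 4 ≤ S.card := by
  have h := isDominating_iff.mp hS
  have H : ∀ (w : Fin 3 × Fin 4) (L : List (Fin 3 × Fin 4)),
      (∀ u : Fin 3 × Fin 4, (w = u ∨ (gridGraph 3 4).Adj u w) → u ∈ L) →
      ∃ u ∈ L, u ∈ S := by
    intro w L hL
    obtain ⟨u, hu, hrel⟩ := h w
    exact ⟨u, hL u hrel, hu⟩
  have h00 := H (0,0) [(0,0),(0,1),(1,0)] (by decide)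
  have h01 := H (0,1) [(0,1),(0,0),(0,2),(1,1)] (by decide)
  have h02 := H (0,2) [(0,2),(0,1),(0,3),(1,2)] (by decide)
  have h03 := H (0,3) [(0,3),(0,2),(1,3)] (by decide)
  have h10 := H (1,0) [(1,0),(0,0),(2,0),(1,1)] (by decide)
  have h11 := H (1,1) [(1,1),(1,0),(1,2),(0,1),(2,1)] (by decide)
  have h12 := H (1,2) [(1,2),(1,1),(1,3),(0,2),(2,2)] (by decide)
  have h13 := H (1,3) [(1,3),(1,2),(0,3),(2,3)] (by decide)
  have h20 := H (2,0) [(2,0),(1,0),(2,1)] (by decide)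
  have h21 := H (2,1) [(2,1),(2,0),(2,2),(1,1)] (by decide)
  have h22 := H (2,2) [(2,2),(2,1),(2,3),(1,2)] (by decide)
  have h23 := H (2,3) [(2,3),(2,2),(1,3)] (by decide)
  simp only [List.mem_cons, List.not_mem_nil, or_false, exists_eq_or_imp, exists_eq_left]
    at h00 h01 h02 h03 h10 h11 h12 h13 h20 h21 h22 h23
  have key := base4b
    (decide (((0:Fin 3),(0:Fin 4)) ∈ S)) (decide (((0:Fin 3),(1:Fin 4)) ∈ S))
    (decide (((0:Fin 3),(2:Fin 4)) ∈ S)) (decide (((0:Fin 3),(3:Fin 4)) ∈ S))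
    (decide (((1:Fin 3),(0:Fin 4)) ∈ S)) (decide (((1:Fin 3),(1:Fin 4)) ∈ S))
    (decide (((1:Fin 3),(2:Fin 4)) ∈ S)) (decide (((1:Fin 3),(3:Fin 4)) ∈ S))
    (decide (((2:Fin 3),(0:Fin 4)) ∈ S)) (decide (((2:Fin 3),(1:Fin 4)) ∈ S))
    (decide (((2:Fin 3),(2:Fin 4)) ∈ S)) (decide (((2:Fin 3),(3:Fin 4)) ∈ S))
    (by simp only [Bool.and_eq_true, Bool.or_eq_true, decide_eq_true_eq]
        exact ⟨⟨⟨⟨⟨⟨⟨⟨⟨⟨⟨h00,h01⟩,h02⟩,h03⟩,h10⟩,h11⟩,h12⟩,h13⟩,h20⟩,h21⟩,h22⟩,h23⟩)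
  simp only [decide_eq_true_eq] at key
  have hcard : S.card = ∑ v : Fin 3 × Fin 4, if v ∈ S then 1 else 0 := by
    rw [← Finset.card_filter]
    exact (congrArg Finset.card (Finset.filter_univ_mem S)).symm
  rw [Fintype.sum_prod_type, Fin.sum_univ_three, Fin.sum_univ_four, Fin.sum_univ_four,
    Fin.sum_univ_four] at hcard
  omega
/-! ### Lower bound recurrences -/

lemma lower_step2 {m : ℕ} (hm : 3 ≤ m) : domNumber 3 (m - 2) + 1 ≤ domNumber 3 m := by
  obtain ⟨D, hD, hcard⟩ := exists_minDom 3 m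
  obtain ⟨S, hSdom, hScard, hSfilt⟩ := block_transport 2 (by omega) (by omega) D hD
  have hsplit := Finset.card_filter_add_card_filter_not
    (s := D) (p := fun v => v.2.val ≤ m - 2)
  have hco : (D.filter (fun v => ¬(v.2.val ≤ m - 2))).card
      = (D.filter (fun v => m - 2 + 1 ≤ v.2.val)).card := by
    congr 1
    apply Finset.filter_congr
    intro x _
    omega
  rcases block2F S hSdom with h1 | h2
  · have hb := hSfilt 1
    obtain ⟨D', hD', hc⟩ := shrink_shift (m - 2) (by omega) (by omega) D hD
    have := domNumber_le hD'
    omega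
  · obtain ⟨D', hD', hc⟩ := shrink_center (m - 2) (by omega) (by omega) D hD
    have := domNumber_le hD'
    have hsplit2 := Finset.card_filter_add_card_filter_not
      (s := D) (p := fun v => v.2.val < m - 2)
    have hco2 : (D.filter (fun v => ¬(v.2.val < m - 2))).card
        = (D.filter (fun v => m - 2 ≤ v.2.val)).card := by
      congr 1
      apply Finset.filter_congr
      intro x _
      omega
    omega

lemma lower_step4 {m : ℕ} (hm : 5 ≤ m) : domNumber 3 (m - 4) + 3 ≤ domNumber 3 m := by
  obtain ⟨D, hD, hcard⟩ := exists_minDom 3 m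
  obtain ⟨S, hSdom, hScard, hSfilt⟩ := block_transport 4 (by omega) (by omega) D hD
  rcases block4F S hSdom with h3 | h4
  · have hb := hSfilt 1
    obtain ⟨D', hD', hc⟩ := shrink_shift (m - 4) (by omega) (by omega) D hD
    have := domNumber_le hD'
    have hsplit := Finset.card_filter_add_card_filter_not
      (s := D) (p := fun v => v.2.val ≤ m - 4)
    have hco : (D.filter (fun v => ¬(v.2.val ≤ m - 4))).card
        = (D.filter (fun v => m - 4 + 1 ≤ v.2.val)).card := by
      congr 1
      apply Finset.filter_congr
      intro x _
      omega
    omega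
  · obtain ⟨D', hD', hc⟩ := shrink_center (m - 4) (by omega) (by omega) D hD
    have := domNumber_le hD'
    have hsplit2 := Finset.card_filter_add_card_filter_not
      (s := D) (p := fun v => v.2.val < m - 4)
    have hco2 : (D.filter (fun v => ¬(v.2.val < m - 4))).card
        = (D.filter (fun v => m - 4 ≤ v.2.val)).card := by
      congr 1
      apply Finset.filter_congr
      intro x _
      omega
    omega
/-! ### The lower bound -/

lemma lower_bound : ∀ m : ℕ, 3 ≤ m → (3 * m + 4) / 4 ≤ domNumber 3 m := by
  intro m
  induction m using Nat.strong_induction_on with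
  | _ m ih =>
    intro hm
    by_cases h4 : m ≤ 4
    · interval_cases m
      · obtain ⟨D, hD, hc⟩ := exists_minDom 3 3
        have := base3F D hD
        omega
      · obtain ⟨D, hD, hc⟩ := exists_minDom 3 4
        have := base4F D hD
        omega
    · by_cases h6 : m ≤ 6
      · have hstep := lower_step2 (m := m) (by omega)
        have hih := ih (m - 2) (by omega) (by omega)
        have h5 : 5 ≤ m := by omega
        interval_cases m
        · norm_num at hstep hih ⊢
          omega
        · norm_num at hstep hih ⊢
          omega
      · have hstep := lower_step4 (m := m) (by omega)
        have hih := ih (m - 4) (by omega) (by omega)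
        have harith : (3 * m + 4) / 4 ≤ (3 * (m - 4) + 4) / 4 + 3 := by omega
        omega
/-! ### The upper bound -/

lemma coverhead : ∀ w : Fin 3 × Fin 5, w.2.val ≤ 3 →
    ∃ u ∈ ([((1:Fin 3),(0:Fin 5)),(0,2),(2,2),(1,4)] : List (Fin 3 × Fin 5)),
      w = u ∨ (gridGraph 3 5).Adj u w := by decide

lemma upper_bound : ∀ m : ℕ, 3 ≤ m →
    ∃ D : Finset (Fin 3 × Fin m), IsDominating 3 m D ∧
      (∀ w : Fin 3 × Fin m, w.1.val = 1 → w.2.val = 0 → w ∈ D) ∧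
      D.card ≤ (3 * m + 4) / 4 := by
  intro m
  induction m using Nat.strong_induction_on with
  | _ m ih =>
    intro hm
    by_cases h6 : m ≤ 6
    · interval_cases m
      · exact ⟨{(1,0),(0,2),(2,2)}, by unfold IsDominating; decide, by decide, by decide⟩
      · exact ⟨{(1,0),(0,2),(2,2),(1,3)}, by unfold IsDominating; decide, by decide, by decide⟩
      · exact ⟨{(1,0),(0,2),(2,2),(1,4)}, by unfold IsDominating; decide, by decide, by decide⟩
      · exact ⟨{(1,0),(0,2),(2,2),(1,4),(1,5)}, by unfold IsDominating; decide, by decide,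
          by decide⟩
    · obtain ⟨D, hDdom, hD0, hDcard⟩ := ih (m - 4) (by omega) (by omega)
      have h7 : 7 ≤ m := by omega
      refine ⟨(D.image (fun v => (v.1, (⟨v.2.val + 4, by have := v.2.isLt; omega⟩ : Fin m)))) ∪
        {((⟨1, by omega⟩ : Fin 3), (⟨0, by omega⟩ : Fin m)),
         ((⟨0, by omega⟩ : Fin 3), (⟨2, by omega⟩ : Fin m)),
         ((⟨2, by omega⟩ : Fin 3), (⟨2, by omega⟩ : Fin m))}, ?_, ?_, ?_⟩
      · rw [isDominating_iff]
        intro v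
        by_cases hv : 4 ≤ v.2.val
        · obtain ⟨u, hu, hrel⟩ := isDominating_iff.mp hDdom
            (v.1, (⟨v.2.val - 4, by have := v.2.isLt; omega⟩ : Fin (m - 4)))
          have hrelv : (v.1.val = u.1.val ∧ v.2.val - 4 = u.2.val) ∨
              Nat.dist u.1.val v.1.val + Nat.dist u.2.val (v.2.val - 4) = 1 := by
            rcases hrel with he | ha
            · exact Or.inl ⟨congrArg (fun p => p.1.val) he, congrArg (fun p => p.2.val) he⟩
            · rw [adj_iff] at ha
              exact Or.inr ha
          refine ⟨(u.1, (⟨u.2.val + 4, by have := u.2.isLt; omega⟩ : Fin m)),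
            Finset.mem_union_left _ (Finset.mem_image_of_mem _ hu), ?_⟩
          simp only [adj_iff, Prod.ext_iff, Fin.ext_iff, Nat.dist] at hrelv ⊢
          omega
        · obtain ⟨u, huL, hrel⟩ := coverhead (v.1, (⟨v.2.val, by omega⟩ : Fin 5)) (by
            simp only []
            omega)
          have hrelv : (v.1.val = u.1.val ∧ v.2.val = u.2.val) ∨
              Nat.dist u.1.val v.1.val + Nat.dist u.2.val v.2.val = 1 := by
            rcases hrel with he | ha
            · exact Or.inl ⟨congrArg (fun p => p.1.val) he, congrArg (fun p => p.2.val) he⟩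
            · rw [adj_iff] at ha
              exact Or.inr ha
          simp only [List.mem_cons, List.not_mem_nil, or_false] at huL
          have hfin : ∀ x : Fin 3, x.val < 3 := fun x => x.isLt
          rcases huL with rfl | rfl | rfl | rfl
          · refine ⟨((⟨1, by omega⟩ : Fin 3), (⟨0, by omega⟩ : Fin m)),
              Finset.mem_union_right _ (Finset.mem_insert_self _ _), ?_⟩
            simp only [adj_iff, Prod.ext_iff, Fin.ext_iff, Nat.dist,
              show ((1:Fin 3)).val = 1 from rfl, show ((0:Fin 5)).val = 0 from rfl] at hrelv ⊢
            omega
          · refine ⟨((⟨0, by omega⟩ : Fin 3), (⟨2, by omega⟩ : Fin m)),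
              Finset.mem_union_right _
                (Finset.mem_insert_of_mem (Finset.mem_insert_self _ _)), ?_⟩
            simp only [adj_iff, Prod.ext_iff, Fin.ext_iff, Nat.dist,
              show ((0:Fin 3)).val = 0 from rfl, show ((2:Fin 5)).val = 2 from rfl] at hrelv ⊢
            omega
          · refine ⟨((⟨2, by omega⟩ : Fin 3), (⟨2, by omega⟩ : Fin m)),
              Finset.mem_union_right _
                (Finset.mem_insert_of_mem (Finset.mem_insert_of_mem
                  (Finset.mem_singleton_self _))), ?_⟩
            simp only [adj_iff, Prod.ext_iff, Fin.ext_iff, Nat.dist,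
              show ((2:Fin 3)).val = 2 from rfl, show ((2:Fin 5)).val = 2 from rfl] at hrelv ⊢
            omega
          · have hmem : ((⟨1, by omega⟩ : Fin 3), (⟨0, by omega⟩ : Fin (m-4))) ∈ D :=
              hD0 _ rfl rfl
            refine ⟨((⟨1, by omega⟩ : Fin 3), (⟨0 + 4, by omega⟩ : Fin m)),
              Finset.mem_union_left _ (Finset.mem_image_of_mem _ hmem), ?_⟩
            simp only [adj_iff, Prod.ext_iff, Fin.ext_iff, Nat.dist,
              show ((1:Fin 3)).val = 1 from rfl, show ((4:Fin 5)).val = 4 from rfl] at hrelv ⊢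
            omega
      · intro w h1 h2
        refine Finset.mem_union_right _ ?_
        have hw : w = ((⟨1, by omega⟩ : Fin 3), (⟨0, by omega⟩ : Fin m)) :=
          Prod.ext (Fin.ext h1) (Fin.ext h2)
        rw [hw]
        exact Finset.mem_insert_self _ _
      · have hc1 : (D.image (fun v : Fin 3 × Fin (m-4) =>
            (v.1, (⟨v.2.val + 4, by have := v.2.isLt; omega⟩ : Fin m)))).card ≤ D.card :=
          Finset.card_image_le
        have hc2 : ({((⟨1, by omega⟩ : Fin 3), (⟨0, by omega⟩ : Fin m)),
            ((⟨0, by omega⟩ : Fin 3), (⟨2, by omega⟩ : Fin m)),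
            ((⟨2, by omega⟩ : Fin 3), (⟨2, by omega⟩ : Fin m))} :
            Finset (Fin 3 × Fin m)).card ≤ 3 :=
          le_trans (Finset.card_insert_le _ _) (by
            exact Nat.succ_le_succ (le_trans (Finset.card_insert_le _ _)
              (Nat.succ_le_succ (le_of_eq (Finset.card_singleton _)))))
        have := Finset.card_union_le
          (D.image (fun v : Fin 3 × Fin (m-4) =>
            (v.1, (⟨v.2.val + 4, by have := v.2.isLt; omega⟩ : Fin m))))
          ({((⟨1, by omega⟩ : Fin 3), (⟨0, by omega⟩ : Fin m)),
            ((⟨0, by omega⟩ : Fin 3), (⟨2, by omega⟩ : Fin m)),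
            ((⟨2, by omega⟩ : Fin 3), (⟨2, by omega⟩ : Fin m))} : Finset (Fin 3 × Fin m))
        have harith : (3 * (m - 4) + 4) / 4 + 3 ≤ (3 * m + 4) / 4 := by omega
        omega

theorem stmt_10 (m : ℕ) (hm : 3 ≤ m) : domNumber 3 m = (3 * m + 4) / 4 := by
  apply le_antisymm
  · obtain ⟨D, hDdom, _, hDcard⟩ := upper_bound m hm
    exact le_trans (domNumber_le hDdom) hDcard
  · exact lower_bound m hm
end

section
/- For all m ≥ 4 with m ∉ {5,6,9}, the domination number of the 4×m grid graph equals m; and for m ∈ {5,6,9} it equals m+1. -/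
/-! ### Auxiliary development -/

lemma gridAdj {n m : ℕ} (u v : Fin n × Fin m) :
    (gridGraph n m).Adj u v ↔ Nat.dist u.1.val v.1.val + Nat.dist u.2.val v.2.val = 1 :=
  Iff.rfl

lemma isDom_iff {n m : ℕ} (D : Finset (Fin n × Fin m)) :
    IsDominating n m D ↔ ∀ v, ∃ d ∈ D, v = d ∨ (gridGraph n m).Adj d v := by
  unfold IsDominating closedNbhd
  rw [Finset.eq_univ_iff_forall]
  apply forall_congr'
  intro v
  simp [Finset.mem_biUnion, SimpleGraph.mem_neighborFinset]

/-! #### The column automaton -/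

abbrev St := Fin 4 → Fin 3
abbrev Col := Fin 4 → Bool

def vertCov (c : Col) (i : Fin 4) : Bool :=
  decide (∃ i' : Fin 4, Nat.dist i'.val i.val = 1 ∧ c i' = true)

def nextSt (s : St) (c : Col) : St := fun i =>
  if c i = true then 0 else if s i = 0 ∨ vertCov c i = true then 1 else 2

def wcol (c : Col) : ℕ := ∑ i, if c i then 1 else 0

def stIdx (s : St) : ℕ := (s 0).val + 3 * (s 1).val + 9 * (s 2).val + 27 * (s 3).val

def psiList : List Nat := [3, 3, 51, 2, 2, 2, 51, 51, 51, 2, 2, 51, 2, 2, 1, 51, 1, 1, 51, 51, 51, 51, 51, 51, 51, 51, 51, 3, 2, 51, 2, 1, 1, 51, 51, 51, 2, 1, 51, 2, 1, 2, 51, 1, 1, 51, 51, 51, 1, 1, 1, 51, 1, 1, 51, 51, 51, 51, 51, 51, 51, 51, 51, 2, 1, 51, 1, 2, 1, 51, 1, 0, 51, 51, 51, 1, 1, 0, 51, 1, 0]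

def vLists : List (List Nat) := [[100, 100, 100, 100, 100, 100, 100, 100, 100, 100, 100, 100, 100, 100, 100, 100, 100, 100, 100, 100, 100, 100, 100, 100, 100, 100, 100, 100, 100, 100, 100, 100, 100, 100, 100, 100, 100, 100, 100, 100, 0, 100, 100, 100, 100, 100, 100, 100, 100, 100, 100, 100, 100, 100, 100, 100, 100, 100, 100, 100, 100, 100, 100, 100, 100, 100, 100, 100, 100, 100, 100, 100, 100, 100, 100, 100, 100, 100, 100, 100, 100], [4, 3, 100, 3, 100, 2, 100, 100, 100, 3, 2, 100, 2, 100, 100, 100, 100, 1, 100, 100, 100, 100, 100, 100, 100, 100, 100, 3, 2, 100, 2, 100, 1, 100, 100, 100, 100, 100, 100, 100, 100, 100, 100, 100, 100, 100, 100, 100, 100, 100, 100, 100, 100, 100, 100, 100, 100, 100, 100, 100, 100, 100, 100, 2, 1, 100, 100, 100, 100, 100, 100, 100, 100, 100, 100, 1, 100, 100, 100, 100, 0], [4, 4, 100, 4, 3, 3, 100, 100, 100, 4, 3, 100, 3, 3, 2, 100, 3, 100, 100, 100, 100, 100, 100, 100, 100, 100, 100, 4, 4, 100, 3, 3, 3,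 100, 100, 100, 3, 3, 100, 3, 4, 3, 100, 3, 100, 100, 100, 100, 3, 3, 2, 100, 2, 100, 100, 100, 100, 100, 100, 100, 100, 100, 100, 3, 3, 100, 2, 3, 2, 100, 2, 100, 100, 100, 100, 100, 100, 100, 100, 100, 100], [6, 5, 100, 5, 4, 5, 100, 100, 100, 5, 4, 100, 4, 4, 4, 100, 3, 4, 100, 100, 100, 100, 100, 100, 100, 100, 100, 5, 4, 100, 4, 4, 4, 100, 100, 100, 4, 4, 100, 4, 4, 4, 100, 4, 3, 100, 100, 100, 3, 4, 3, 100, 3, 3, 100, 100, 100, 100, 100, 100, 100, 100, 100, 5, 4, 100, 4, 4, 4, 100, 3, 3, 100, 100, 100, 4, 3, 3, 100, 3, 4], [7, 6, 100, 6, 5, 5, 100, 100, 100, 6, 5, 100, 6, 5, 5, 100, 5, 5, 100, 100, 100, 100, 100, 100, 100, 100, 100, 6, 5, 100, 5, 4, 5, 100, 100, 100, 5, 4, 100, 5, 6, 5, 100, 5, 4, 100, 100, 100, 5, 5, 4, 100, 4, 4, 100, 100, 100, 100, 100, 100, 100, 100, 100, 5, 5, 100, 5, 5, 4, 100, 4,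 4, 100, 100, 100, 5, 4, 4, 100, 4, 4], [8, 7, 100, 7, 7, 6, 100, 100, 100, 7, 6, 100, 6, 6, 5, 100, 6, 5, 100, 100, 100, 100, 100, 100, 100, 100, 100, 7, 6, 100, 6, 6, 5, 100, 100, 100, 7, 6, 100, 6, 7, 6, 100, 6, 5, 100, 100, 100, 6, 6, 5, 100, 6, 5, 100, 100, 100, 100, 100, 100, 100, 100, 100, 6, 5, 100, 5, 6, 5, 100, 5, 4, 100, 100, 100, 5, 5, 4, 100, 5, 6], [8, 8, 100, 7, 7, 7, 100, 100, 100, 7, 7, 100, 7, 7, 6, 100, 6, 7, 100, 100, 100, 100, 100, 100, 100, 100, 100, 8, 8, 100, 7, 7, 7, 100, 100, 100, 7, 7, 100, 7, 8, 7, 100, 7, 7, 100, 100, 100, 6, 7, 6, 100, 6, 6, 100, 100, 100, 100, 100, 100, 100, 100, 100, 7, 7, 100, 6, 7, 6, 100, 6, 6, 100, 100, 100, 7, 7, 6, 100, 6, 7], [10, 9, 100, 9, 8, 9, 100, 100, 100, 9, 8, 100, 8, 8, 8, 100, 7, 8, 100, 100, 100, 100, 100, 100, 100, 100, 100, 9,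 8, 100, 8, 7, 8, 100, 100, 100, 8, 7, 100, 8, 8, 8, 100, 7, 7, 100, 100, 100, 7, 7, 7, 100, 7, 7, 100, 100, 100, 100, 100, 100, 100, 100, 100, 9, 8, 100, 8, 8, 8, 100, 7, 7, 100, 100, 100, 8, 7, 7, 100, 7, 8], [11, 10, 100, 10, 9, 9, 100, 100, 100, 10, 9, 100, 9, 9, 8, 100, 9, 8, 100, 100, 100, 100, 100, 100, 100, 100, 100, 10, 9, 100, 9, 8, 8, 100, 100, 100, 9, 8, 100, 9, 10, 9, 100, 9, 8, 100, 100, 100, 9, 9, 8, 100, 8, 8, 100, 100, 100, 100, 100, 100, 100, 100, 100, 9, 8, 100, 8, 9, 8, 100, 8, 7, 100, 100, 100, 8, 8, 7, 100, 8, 8], [11, 11, 100, 10, 10, 10, 100, 100, 100, 10, 10, 100, 10, 10, 9, 100, 9, 9, 100, 100, 100, 100, 100, 100, 100, 100, 100, 11, 10, 100, 10, 10, 9, 100, 100, 100, 10, 10, 100, 10, 11, 10, 100, 10, 9, 100, 100, 100, 9, 10, 9, 100, 9, 9, 100, 100, 100, 100, 100, 100, 100, 100, 100, 10, 9, 100,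 9, 10, 9, 100, 9, 8, 100, 100, 100, 9, 9, 8, 100, 9, 10]]

def psi (s : St) : ℕ := psiList.getD (stIdx s) 0
def vtab (j : ℕ) (s : St) : ℕ := (vLists.getD j []).getD (stIdx s) 0
def sInit : St := fun _ => 1

theorem psi_init : psi sInit = 1 := by decide
theorem psi_edge : ∀ s : St, ∀ c : Col, (∀ i, s i = 2 → c i = true) →
    psi (nextSt s c) + 1 ≤ psi s + wcol c := by decide
theorem psi_acc : ∀ s : St, (∀ i, s i ≠ 2) → 1 ≤ psi s := by decide
theorem vtab_edge : ∀ j : Fin 9, ∀ s : St, ∀ c : Col, (∀ i, s i = 2 → c i = true) →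
    vtab (j.val+1) (nextSt s c) ≤ vtab j.val s + wcol c := by decide
theorem vtab_init : vtab 0 sInit = 0 := by decide
theorem vtab_acc : ∀ s : St, (∀ i, s i ≠ 2) →
    6 ≤ vtab 5 s ∧ 7 ≤ vtab 6 s ∧ 10 ≤ vtab 9 s := by decide

/-! #### Traces of dominating sets -/

section Trace

variable {m : ℕ} (D : Finset (Fin 4 × Fin m))

def colOf (j : ℕ) : Col := fun i =>
  if hj : j < m then decide ((i, (⟨j, hj⟩ : Fin m)) ∈ D) else false

def trace : ℕ → St
  | 0 => sInit
  | j+1 => nextSt (trace j) (colOf D j)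

def memN (i : Fin 4) (j : ℕ) : Prop := colOf D j i = true

def covered (i : Fin 4) (j : ℕ) : Prop :=
  memN D i j ∨ (0 < j ∧ memN D i (j-1)) ∨
    ∃ i' : Fin 4, Nat.dist i'.val i.val = 1 ∧ memN D i' j

lemma trace_spec : ∀ j (i : Fin 4),
    (trace D j i = 0 ↔ 0 < j ∧ memN D i (j-1)) ∧
    (trace D j i = 2 ↔ 0 < j ∧ ¬ covered D i (j-1)) := by
  intro j
  induction j with
  | zero =>
    intro i
    have h0 : trace D 0 i = 1 := rfl
    rw [h0]
    constructor
    · exact ⟨fun h => absurd h (by decide), fun h => absurd h.1 (by omega)⟩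
    · exact ⟨fun h => absurd h (by decide), fun h => absurd h.1 (by omega)⟩
  | succ j ih =>
    intro i
    have hstep : trace D (j+1) i =
        (if colOf D j i = true then 0
         else if trace D j i = 0 ∨ vertCov (colOf D j) i = true then 1 else 2) := rfl
    by_cases hc : colOf D j i = true
    · rw [hstep, if_pos hc]
      refine ⟨⟨fun _ => ⟨Nat.succ_pos _, by simpa [memN] using hc⟩, fun _ => rfl⟩, ?_⟩
      constructor
      · intro h; exact absurd h (by decide)
      · rintro ⟨-, hcov⟩
        exact absurd (Or.inl (by simpa [memN] using hc)) hcov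
    · rw [hstep, if_neg hc]
      by_cases h1 : trace D j i = 0 ∨ vertCov (colOf D j) i = true
      · rw [if_pos h1]
        constructor
        · constructor
          · intro h; exact absurd h (by decide)
          · rintro ⟨-, hmem⟩
            exact absurd (show colOf D j i = true from hmem) hc
        · constructor
          · intro h; exact absurd h (by decide)
          · rintro ⟨-, hcov⟩
            refine absurd ?_ hcov
            rcases h1 with h1 | h1
            · rcases (ih i).1.mp h1 with ⟨hj0, hmem⟩
              exact Or.inr (Or.inl ⟨hj0, hmem⟩)
            · rcases (by simpa [vertCov] using h1 :
                ∃ i' : Fin 4, Nat.dist i'.val i.val = 1 ∧ colOf D j i' = true) with ⟨i', hd, hm'⟩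
              exact Or.inr (Or.inr ⟨i', hd, hm'⟩)
      · rw [if_neg h1]
        push_neg at h1
        constructor
        · constructor
          · intro h; exact absurd h (by decide)
          · rintro ⟨-, hmem⟩
            exact absurd (show colOf D j i = true from hmem) hc
        · refine ⟨fun _ => ⟨Nat.succ_pos _, ?_⟩, fun _ => rfl⟩
          rintro (h | ⟨hj0, h⟩ | ⟨i', hd, h⟩)
          · exact hc h
          · exact h1.1 ((ih i).1.mpr ⟨hj0, h⟩)
          · exact h1.2 (by simp [vertCov]; exact ⟨i', hd, h⟩)

variable {D}

lemma undominated_push (hD : ∀ v : Fin 4 × Fin m, ∃ d ∈ D, v = d ∨ (gridGraph 4 m).Adj d v)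
    {j : ℕ} (hj : j < m) {i : Fin 4} (h2 : trace D (j+1) i = 2) : memN D i (j+1) := by
  have hcov : ¬ covered D i j := by
    have := (trace_spec D (j+1) i).2.mp h2
    simpa using this.2
  obtain ⟨d, hd, hcase⟩ := hD (i, ⟨j, hj⟩)
  have hmem : memN D d.1 d.2.val := by
    simp only [memN, colOf, dif_pos d.2.isLt, decide_eq_true_eq]
    simpa using hd
  rcases hcase with rfl | hadj
  · exact absurd (Or.inl hmem) hcov
  · rw [gridAdj] at hadj
    simp only at hadj
    rcases Nat.lt_or_ge d.2.val j with hlt | hge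
    · -- d is in an earlier column; must be column j-1, same row
      have hri : d.1 = i := by
        have : Nat.dist d.1.val i.val = 0 := by
          have hb : Nat.dist d.2.val j ≥ 1 := by simp [Nat.dist]; omega
          omega
        have := Nat.eq_of_dist_eq_zero this
        exact Fin.ext this
      have hcol : d.2.val = j - 1 ∧ 0 < j := by
        have : Nat.dist d.2.val j = 1 := by
          have : Nat.dist d.1.val i.val = 0 := by
            have hb : Nat.dist d.2.val j ≥ 1 := by simp [Nat.dist]; omega
            omega
          omega
        simp [Nat.dist] at this; omega
      exact absurd (Or.inr (Or.inl ⟨hcol.2, by rw [← hri, ← hcol.1]; exact hmem⟩)) hcov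
    · rcases Nat.eq_or_lt_of_le hge with heq | hgt
      · -- same column: vertical neighbor
        have hdist : Nat.dist d.1.val i.val = 1 := by
          have : Nat.dist d.2.val j = 0 := by simp [Nat.dist]; omega
          omega
        exact absurd (Or.inr (Or.inr ⟨d.1, hdist, by rw [heq]; exact hmem⟩)) hcov
      · -- later column: must be column j+1, same row
        have hri : d.1 = i := by
          have : Nat.dist d.1.val i.val = 0 := by
            have hb : Nat.dist d.2.val j ≥ 1 := by simp [Nat.dist]; omega
            omega
          exact Fin.ext (Nat.eq_of_dist_eq_zero this)
        have hcol : d.2.val = j + 1 := by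
          have : Nat.dist d.2.val j = 1 := by
            have : Nat.dist d.1.val i.val = 0 := by
              have hb : Nat.dist d.2.val j ≥ 1 := by simp [Nat.dist]; omega
              omega
            omega
          simp [Nat.dist] at this; omega
        rw [← hri, ← hcol]; exact hmem

lemma final_no2 (hD : ∀ v : Fin 4 × Fin m, ∃ d ∈ D, v = d ∨ (gridGraph 4 m).Adj d v) :
    ∀ i, trace D m i ≠ 2 := by
  intro i h2
  rcases Nat.eq_zero_or_pos m with hm0 | hm0
  · subst hm0
    exact absurd h2 (by rw [show trace D 0 i = 1 from rfl]; decide)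
  · have hk : m - 1 + 1 = m := by omega
    have h2' : trace D (m-1+1) i = 2 := by rw [hk]; exact h2
    have hmem := undominated_push hD (by omega) h2'
    rw [hk] at hmem
    simp only [memN, colOf, dif_neg (lt_irrefl m)] at hmem
    exact absurd hmem (by decide)

lemma valid_step (hD : ∀ v : Fin 4 × Fin m, ∃ d ∈ D, v = d ∨ (gridGraph 4 m).Adj d v)
    {j : ℕ} (hj : j < m) : ∀ i, trace D j i = 2 → colOf D j i = true := by
  intro i h2
  rcases Nat.eq_zero_or_pos j with rfl | hj0
  · exact absurd h2 (by rw [show trace D 0 i = 1 from rfl]; decide)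
  · have hk : j - 1 + 1 = j := by omega
    have h2' : trace D (j-1+1) i = 2 := by rw [hk]; exact h2
    have hmem := undominated_push hD (by omega : j - 1 < m) h2'
    rw [hk] at hmem
    exact hmem

variable (D)

def cost (j : ℕ) : ℕ := ∑ j' ∈ Finset.range j, wcol (colOf D j')

variable {D}

lemma cost_psi (hD : ∀ v : Fin 4 × Fin m, ∃ d ∈ D, v = d ∨ (gridGraph 4 m).Adj d v) :
    ∀ j, j ≤ m → j + psi (trace D j) ≤ cost D j + 1 := by
  intro j
  induction j with
  | zero => intro _; simp [cost, trace, psi_init]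
  | succ j ih =>
    intro hj1
    have hv := valid_step hD (by omega : j < m)
    have hedge := psi_edge (trace D j) (colOf D j) hv
    have hih := ih (by omega)
    have hcost : cost D (j+1) = cost D j + wcol (colOf D j) := Finset.sum_range_succ _ _
    have htr : trace D (j+1) = nextSt (trace D j) (colOf D j) := rfl
    rw [htr, hcost]
    omega

lemma cost_vtab (hD : ∀ v : Fin 4 × Fin m, ∃ d ∈ D, v = d ∨ (gridGraph 4 m).Adj d v)
    (hm9 : m ≤ 9) : ∀ j, j ≤ m → vtab j (trace D j) ≤ cost D j := by
  intro j
  induction j with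
  | zero => intro _; simp [cost, trace, vtab_init]
  | succ j ih =>
    intro hj1
    have hv := valid_step hD (by omega : j < m)
    have hedge := vtab_edge ⟨j, by omega⟩ (trace D j) (colOf D j) hv
    have hih := ih (by omega)
    have hcost : cost D (j+1) = cost D j + wcol (colOf D j) := Finset.sum_range_succ _ _
    have htr : trace D (j+1) = nextSt (trace D j) (colOf D j) := rfl
    rw [htr, hcost]
    simp only at hedge
    omega

lemma card_eq_cost (D : Finset (Fin 4 × Fin m)) : D.card = cost D m := by
  have h1 : D.card = ∑ x : Fin 4 × Fin m, if x ∈ D then 1 else 0 := by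
    rw [Finset.sum_ite_mem, Finset.univ_inter, Finset.card_eq_sum_ones]
  rw [h1, Fintype.sum_prod_type_right]
  have h2 : ∀ j : Fin m, (∑ i : Fin 4, if (i, j) ∈ D then 1 else 0) = wcol (colOf D j.val) := by
    intro j
    apply Finset.sum_congr rfl
    intro i _
    simp only [colOf, dif_pos j.isLt, decide_eq_true_eq]
  calc (∑ j : Fin m, ∑ i : Fin 4, if (i, j) ∈ D then 1 else 0)
      = ∑ j : Fin m, wcol (colOf D j.val) := by
        exact Finset.sum_congr rfl fun j _ => h2 j
    _ = ∑ j' ∈ Finset.range m, wcol (colOf D j') :=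
        Fin.sum_univ_eq_sum_range (fun j' => wcol (colOf D j')) m
    _ = cost D m := rfl

lemma lower_bound_s11 (D : Finset (Fin 4 × Fin m)) (hdom : IsDominating 4 m D) :
    m ≤ D.card := by
  have hD := (isDom_iff D).mp hdom
  have h1 := cost_psi hD m le_rfl
  have h2 := psi_acc (trace D m) (final_no2 hD)
  have h3 := card_eq_cost D
  omega

end Trace

lemma lower_bound_ex {m : ℕ} (t : ℕ) (hm9 : m ≤ 9)
    (hacc : ∀ s : St, (∀ i, s i ≠ 2) → t ≤ vtab m s)
    (D : Finset (Fin 4 × Fin m)) (hdom : IsDominating 4 m D) : t ≤ D.card := by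
  have hD := (isDom_iff D).mp hdom
  have h1 := cost_vtab hD hm9 m le_rfl
  have h2 := hacc (trace D m) (final_no2 hD)
  have h3 := card_eq_cost D
  omega

/-! #### Upper bounds: explicit dominating sets and concatenation -/

def exV (m k : ℕ) : Prop :=
  ∃ D : Finset (Fin 4 × Fin m), IsDominating 4 m D ∧ D.card = k

lemma exV_4 : exV 4 4 :=
  ⟨{(2,0),(0,1),(3,2),(1,3)}, (isDom_iff _).mpr (by decide), by decide⟩

lemma exV_5 : exV 5 6 :=
  ⟨{(3,0),(0,1),(1,1),(2,3),(3,3),(0,4)}, (isDom_iff _).mpr (by decide), by decide⟩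

lemma exV_6 : exV 6 7 :=
  ⟨{(2,0),(0,1),(3,2),(1,3),(0,5),(2,5),(3,5)}, (isDom_iff _).mpr (by decide), by decide⟩

lemma exV_7 : exV 7 7 :=
  ⟨{(2,0),(0,1),(3,2),(1,3),(3,4),(0,5),(2,6)}, (isDom_iff _).mpr (by decide), by decide⟩

lemma exV_10 : exV 10 10 :=
  ⟨{(2,0),(0,1),(3,2),(1,3),(3,4),(0,5),(2,6),(0,7),(3,8),(1,9)},
   (isDom_iff _).mpr (by decide), by decide⟩

lemma exV_13 : exV 13 13 :=
  ⟨{(2,0),(0,1),(3,2),(1,3),(3,4),(0,5),(2,6),(0,7),(3,8),(1,9),(3,10),(0,11),(2,12)},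
   (isDom_iff _).mpr (by decide), by decide⟩

lemma exV_concat {m k : ℕ} (h : exV m k) : exV (m+4) (k+4) := by
  obtain ⟨D, hD, hcard⟩ := h
  obtain ⟨E, hE, hEcard⟩ := exV_4
  have hD' := (isDom_iff D).mp hD
  have hE' := (isDom_iff E).mp hE
  let f : Fin 4 × Fin m ↪ Fin 4 × Fin (m+4) :=
    ⟨fun p => (p.1, ⟨p.2.val, by omega⟩), by
      rintro ⟨a1, a2⟩ ⟨b1, b2⟩ h
      simp [Prod.ext_iff, Fin.ext_iff] at h ⊢
      exact h⟩
  let g : Fin 4 × Fin 4 ↪ Fin 4 × Fin (m+4) :=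
    ⟨fun p => (p.1, ⟨m + p.2.val, by omega⟩), by
      rintro ⟨a1, a2⟩ ⟨b1, b2⟩ h
      simp [Prod.ext_iff, Fin.ext_iff] at h ⊢
      exact h⟩
  refine ⟨D.map f ∪ E.map g, (isDom_iff _).mpr ?_, ?_⟩
  · rintro ⟨i, j⟩
    by_cases hj : j.val < m
    · obtain ⟨d, hd, hcase⟩ := hD' (i, ⟨j.val, hj⟩)
      refine ⟨f d, Finset.mem_union_left _ (Finset.mem_map_of_mem f hd), ?_⟩
      rcases hcase with heq | hadj
      · left
        have h1 : i = d.1 := congrArg Prod.fst heq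
        have h2 : j.val = d.2.val := congrArg (fun p => (Prod.snd p).val) heq
        simp [f, Prod.ext_iff, Fin.ext_iff, h1, h2, DFunLike.coe]
      · right
        rw [gridAdj] at hadj ⊢
        simpa [f, DFunLike.coe] using hadj
    · obtain ⟨e, he, hcase⟩ := hE' (i, ⟨j.val - m, by omega⟩)
      refine ⟨g e, Finset.mem_union_right _ (Finset.mem_map_of_mem g he), ?_⟩
      rcases hcase with heq | hadj
      · left
        have h1 : i = e.1 := congrArg Prod.fst heq
        have h2 : j.val - m = e.2.val := congrArg (fun p => (Prod.snd p).val) heq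
        simp [g, Prod.ext_iff, Fin.ext_iff, h1, DFunLike.coe]
        omega
      · right
        rw [gridAdj] at hadj ⊢
        simp [g, DFunLike.coe] at hadj ⊢
        simp [Nat.dist] at hadj ⊢
        omega
  · rw [Finset.card_union_of_disjoint, Finset.card_map, Finset.card_map, hcard, hEcard]
    rw [Finset.disjoint_left]
    rintro a ha hb
    rw [Finset.mem_map] at ha hb
    obtain ⟨p, -, hp⟩ := ha
    obtain ⟨q, -, hq⟩ := hb
    have h1 : a.2.val < m := by rw [← hp]; exact p.2.isLt
    have h2 : m ≤ a.2.val := by rw [← hq]; simp [g, DFunLike.coe]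
    omega

lemma UBmain : ∀ m, 4 ≤ m → m ≠ 5 → m ≠ 6 → m ≠ 9 → exV m m := by
  intro m
  induction m using Nat.strong_induction_on with
  | _ m ih =>
    intro h4 h5 h6 h9
    by_cases hlt : m < 14
    · interval_cases m
      · exact exV_4
      · omega
      · omega
      · exact exV_7
      · exact exV_concat exV_4
      · omega
      · exact exV_10
      · exact exV_concat exV_7
      · exact exV_concat (exV_concat exV_4)
      · exact exV_13
    · have h := ih (m - 4) (by omega) (by omega) (by omega) (by omega) (by omega)
      have h2 := exV_concat h
      have heq : m - 4 + 4 = m := by omega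
      rw [heq] at h2
      exact h2

lemma dom_eq {m : ℕ} (t : ℕ) (hub : exV m t)
    (hlb : ∀ D : Finset (Fin 4 × Fin m), IsDominating 4 m D → t ≤ D.card) :
    domNumber 4 m = t := by
  obtain ⟨D, hD, hcard⟩ := hub
  apply le_antisymm
  · exact Nat.sInf_le ⟨D, hD, hcard⟩
  · exact le_csInf ⟨t, D, hD, hcard⟩ (by rintro k ⟨E, hE, rfl⟩; exact hlb E hE)

theorem stmt_11 (m : ℕ) (hm : 4 ≤ m) :
    (m ∉ ({5, 6, 9} : Set ℕ) → domNumber 4 m = m) ∧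
    (m ∈ ({5, 6, 9} : Set ℕ) → domNumber 4 m = m + 1) := by
  constructor
  · intro hne
    simp only [Set.mem_insert_iff, Set.mem_singleton_iff] at hne
    push_neg at hne
    exact dom_eq m (UBmain m hm hne.1 hne.2.1 hne.2.2) (fun D hD => lower_bound_s11 D hD)
  · intro hmem
    simp only [Set.mem_insert_iff, Set.mem_singleton_iff] at hmem
    rcases hmem with rfl | rfl | rfl
    · exact dom_eq 6 exV_5
        (lower_bound_ex 6 (by omega) (fun s hs => ((vtab_acc s hs).1)))
    · exact dom_eq 7 exV_6
        (lower_bound_ex 7 (by omega) (fun s hs => ((vtab_acc s hs).2.1)))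
    · exact dom_eq 10 (exV_concat exV_5)
        (lower_bound_ex 10 (by omega) (fun s hs => ((vtab_acc s hs).2.2)))
end
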